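/- Main Lemma (abstract form): Let E = O ⊔ 𝓔 be a finite set and b : 𝔽₂^E → 𝔽₂^E a linear map satisfying: symmetry (y ∈ b(x) ↔ x ∈ b(y)); x ∈ b(x) ↔ x ∈ O; b(x) ≠ b(y) for x ∈ 𝓔, y ∈ O; b(x) ∈ {∅, O} for every x ∈ 𝓔; dim(Im b) ≤ 2; and O ≠ ∅ when dim(Im b) ≥ 1. Then there exist partitions (O₀, O₁) of O and (𝓔₀, 𝓔₁) of 𝓔 such that b(x) = O₀ ∪ 𝓔₁ for x ∈ O₀, b(x) = O₁ ∪ 𝓔₁ for x ∈ O₁, b(x) = ∅ for x ∈ 𝓔₀, and b(x) = O for x ∈ 𝓔₁. Moreover, if dim(Im b) = 2 then O₀ ≠ ∅ and at most one of O₁, 𝓔₁ is empty. -/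

import Mathlib

theorem five_le_card' {α : Type*} [Fintype α] [DecidableEq α] (a b c d e : α)
    (h1 : a ≠ b) (h2 : a ≠ c) (h3 : a ≠ d) (h4 : a ≠ e) (h5 : b ≠ c) (h6 : b ≠ d)
    (h7 : b ≠ e) (h8 : c ≠ d) (h9 : c ≠ e) (h10 : d ≠ e) : 5 ≤ Fintype.card α := by
  have : ({a, b, c, d, e} : Finset α).card = 5 := by
    rw [Finset.card_insert_of_notMem (by simp [h1, h2, h3, h4]),
      Finset.card_insert_of_notMem (by simp [h5, h6, h7]),
      Finset.card_insert_of_notMem (by simp [h8, h9]),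
      Finset.card_insert_of_notMem (by simp [h10]), Finset.card_singleton]
  exact this ▸ Finset.card_le_univ _

theorem main_lemma
    {E : Type*} [Fintype E] [DecidableEq E]
    (O 𝓔 : Finset E) (hpart : O ∪ 𝓔 = Finset.univ) (hdisj : Disjoint O 𝓔)
    (b : (E → ZMod 2) →ₗ[ZMod 2] (E → ZMod 2))
    (B : E → Finset E)
    (hB : ∀ x y : E, y ∈ B x ↔ b (Pi.single x 1) y = 1)
    (hsym : ∀ x y : E, y ∈ B x ↔ x ∈ B y)
    (hself : ∀ x : E, x ∈ B x ↔ x ∈ O)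
    (hsep : ∀ x ∈ 𝓔, ∀ y ∈ O, B x ≠ B y)
    (hE : ∀ x ∈ 𝓔, B x = ∅ ∨ B x = O)
    (hdim : Module.finrank (ZMod 2) (LinearMap.range b) ≤ 2)
    (hO : 1 ≤ Module.finrank (ZMod 2) (LinearMap.range b) → O.Nonempty) :
    ∃ O₀ O₁ 𝓔₀ 𝓔₁ : Finset E,
      O₀ ∪ O₁ = O ∧ Disjoint O₀ O₁ ∧
      𝓔₀ ∪ 𝓔₁ = 𝓔 ∧ Disjoint 𝓔₀ 𝓔₁ ∧
      (∀ x ∈ O₀, B x = O₀ ∪ 𝓔₁) ∧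
      (∀ x ∈ O₁, B x = O₁ ∪ 𝓔₁) ∧
      (∀ x ∈ 𝓔₀, B x = ∅) ∧
      (∀ x ∈ 𝓔₁, B x = O) ∧
      (Module.finrank (ZMod 2) (LinearMap.range b) = 2 →
        O₀.Nonempty ∧ ¬(O₁ = ∅ ∧ 𝓔₁ = ∅)) := by
  classical
  set v : E → (E → ZMod 2) := fun x => b (Pi.single x 1) with hv
  have hbit : ∀ a : ZMod 2, a = 0 ∨ a = 1 := by decide
  have bitdet : ∀ a c : ZMod 2, (a = 1 ↔ c = 1) → a = c := by decide
  have hadd2 : ∀ a : ZMod 2, a + a = 0 := by decide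
  have hmem : ∀ x z : E, z ∈ B x ↔ v x z = 1 := hB
  have hval0 : ∀ x z : E, z ∉ B x ↔ v x z = 0 := by
    intro x z
    rcases hbit (v x z) with h | h <;> simp [hmem, h]
  have hseteq : ∀ x y : E, v x = v y → B x = B y := by
    intro x y h
    ext z
    rw [hmem, hmem, h]
  have hveq : ∀ x y : E, B x = B y → v x = v y := by
    intro x y h
    funext z
    exact bitdet _ _ (by rw [← hmem, ← hmem, h])
  have hnz : ∀ x ∈ O, v x ≠ 0 := by
    intro x hx h
    have h1 : v x x = 1 := (hmem x x).mp ((hself x).mpr hx)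
    rw [h] at h1
    simp at h1
  have huniv : ∀ z : E, z ∈ O ∨ z ∈ 𝓔 := by
    intro z
    have : z ∈ O ∪ 𝓔 := hpart ▸ Finset.mem_univ z
    simpa [Finset.mem_union] using this
  have hEO : ∀ x ∈ O, ∀ t ∈ 𝓔, (t ∈ B x ↔ B t = O) := by
    intro x hx t ht
    rw [hsym]
    rcases hE t ht with h | h
    · simp only [h]
      constructor
      · intro h'
        exact absurd h' (by simp)
      · intro h'
        exact absurd (h' ▸ hx : x ∈ (∅ : Finset E)) (by simp)
    · simp [h, hx]
  have hadd : ∀ p : E → ZMod 2, p + p = 0 := by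
    intro p
    funext z
    exact hadd2 (p z)
  have haddne : ∀ p q : E → ZMod 2, p ≠ q → p + q ≠ 0 := by
    intro p q hne h
    exact hne ((eq_neg_of_add_eq_zero_left h).trans (neg_eq_of_add_eq_zero_left (hadd q)))
  haveI : Fintype (LinearMap.range b) := Fintype.ofFinite _
  have hcard : Fintype.card (LinearMap.range b) ≤ 4 := by
    calc Fintype.card (LinearMap.range b)
        = Fintype.card (ZMod 2) ^ Module.finrank (ZMod 2) (LinearMap.range b) :=
          Module.card_eq_pow_finrank
      _ ≤ 2 ^ 2 := by
          rw [ZMod.card]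
          exact Nat.pow_le_pow_right (by norm_num) hdim
      _ = 4 := by norm_num
  have hvr : ∀ x : E, v x ∈ LinearMap.range b := fun x => ⟨Pi.single x 1, rfl⟩
  have key : ∀ p q r : E → ZMod 2, p ∈ LinearMap.range b → q ∈ LinearMap.range b →
      r ∈ LinearMap.range b → p ≠ 0 → q ≠ 0 → r ≠ 0 → p ≠ q → r ≠ p → r ≠ q →
      r = p + q := by
    intro p q r hp hq hr hp0 hq0 hr0 hpq hrp hrq
    by_contra hne
    have h5 : (5 : ℕ) ≤ Fintype.card (LinearMap.range b) := by
      refine five_le_card' (⟨0, Submodule.zero_mem _⟩ : LinearMap.range b)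
        ⟨p, hp⟩ ⟨q, hq⟩ ⟨p + q, Submodule.add_mem _ hp hq⟩ ⟨r, hr⟩
        ?_ ?_ ?_ ?_ ?_ ?_ ?_ ?_ ?_ ?_ <;>
        intro h <;> replace h := congrArg Subtype.val h <;> simp only at h
      · exact hp0 h.symm
      · exact hq0 h.symm
      · exact haddne p q hpq h.symm
      · exact hr0 h.symm
      · exact hpq h
      · exact hq0 (left_eq_add.mp h)
      · exact hrp h.symm
      · exact hp0 (right_eq_add.mp h)
      · exact hrq h.symm
      · exact hne h.symm
    omega
  have K : ∀ x ∈ O, ∀ y ∈ O, y ∈ B x → B x = B y := by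
    intro x hx y hy hyx
    by_contra hne
    have hxy : x ∈ B y := (hsym x y).mp hyx
    have hpq : v x ≠ v y := fun h => hne (hseteq _ _ h)
    have hsum : v x + v y ≠ 0 := haddne _ _ hpq
    obtain ⟨z, hz⟩ : ∃ z, v x z + v y z = 1 := by
      by_contra h
      push_neg at h
      refine hsum (funext fun z => ?_)
      show v x z + v y z = 0
      rcases hbit (v x z + v y z) with h' | h'
      · exact h'
      · exact absurd h' (h z)
    have hzO : z ∈ O := by
      rcases huniv z with h | h
      · exact h
      · exfalso
        have e1 : v x z = v y z :=
          bitdet _ _ (by rw [← hmem, ← hmem, hEO x hx z h, hEO y hy z h])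
        rw [e1, hadd2 (v y z)] at hz
        exact absurd hz (by decide)
    by_cases h1 : v z = v x
    · have hBzx : B z = B x := hseteq _ _ h1
      have m1 : v x z = 1 := (hmem x z).mp (hBzx ▸ (hself z).mpr hzO)
      have m2 : v y z = 1 := by
        have hyz : y ∈ B z := hBzx.symm ▸ hyx
        exact (hmem y z).mp ((hsym z y).mp hyz)
      rw [m1, m2] at hz
      exact absurd hz (by decide)
    by_cases h2 : v z = v y
    · have hBzy : B z = B y := hseteq _ _ h2
      have m2 : v y z = 1 := (hmem y z).mp (hBzy ▸ (hself z).mpr hzO)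
      have m1 : v x z = 1 := by
        have hxz : x ∈ B z := hBzy.symm ▸ hxy
        exact (hmem x z).mp ((hsym z x).mp hxz)
      rw [m1, m2] at hz
      exact absurd hz (by decide)
    · have hr := key (v x) (v y) (v z) (hvr x) (hvr y) (hvr z)
        (hnz x hx) (hnz y hy) (hnz z hzO) hpq h1 h2
      have mxx : v x x = 1 := (hmem x x).mp ((hself x).mpr hx)
      have myx : v y x = 1 := (hmem y x).mp hxy
      have hzx : v z x = 0 := by
        rw [hr]
        show v x x + v y x = 0
        rw [mxx, myx]
        decide
      have hxz0 : v x z = 0 := by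
        have hnb : x ∉ B z := by
          rw [hmem]
          simp [hzx]
        have : z ∉ B x := fun hc => hnb ((hsym x z).mp hc)
        exact (hval0 x z).mp this
      have mxy : v x y = 1 := (hmem x y).mp hyx
      have myy : v y y = 1 := (hmem y y).mp ((hself y).mpr hy)
      have hzy : v z y = 0 := by
        rw [hr]
        show v x y + v y y = 0
        rw [mxy, myy]
        decide
      have hyz0 : v y z = 0 := by
        have hnb : y ∉ B z := by
          rw [hmem]
          simp [hzy]
        have : z ∉ B y := fun hc => hnb ((hsym y z).mp hc)
        exact (hval0 y z).mp this
      rw [hxz0, hyz0] at hz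
      exact absurd hz (by decide)
  have hrange : LinearMap.range b = Submodule.span (ZMod 2) (Set.range v) := by
    conv_lhs => rw [LinearMap.range_eq_map, ← (Pi.basisFun (ZMod 2) E).span_eq,
      Submodule.map_span]
    congr 1
    ext w
    simp [Set.range_comp, hv]
  rcases O.eq_empty_or_nonempty with hOe | ⟨x₀, hx₀⟩
  · refine ⟨∅, ∅, 𝓔, ∅, by simp [hOe], by simp, by simp, by simp,
      by simp, by simp, ?_, by simp, ?_⟩
    · intro x hx
      rcases hE x hx with h | h
      · exact h
      · rw [h, hOe]
    · intro h2
      exact absurd (hO (by omega)) (by simp [hOe])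
  · have hclass : ∀ y ∈ O, ∀ z ∈ O, B y ≠ B x₀ → B z ≠ B x₀ → B y = B z := by
      intro y hy z hz hyne hzne
      by_contra hne
      have nzx : z ∉ B x₀ := fun h => hzne (K x₀ hx₀ z hz h).symm
      have nzy : z ∉ B y := fun h => hne (K y hy z hz h)
      have hpq : v x₀ ≠ v y := fun h => hyne (hseteq _ _ h).symm
      have hr := key (v x₀) (v y) (v z) (hvr _) (hvr _) (hvr _)
        (hnz _ hx₀) (hnz _ hy) (hnz _ hz) hpq
        (fun h => hzne (hseteq _ _ h)) (fun h => hne (hseteq _ _ h).symm)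
      have a1 : v x₀ z = 0 := (hval0 x₀ z).mp nzx
      have a2 : v y z = 0 := (hval0 y z).mp nzy
      have a3 : v z z = 1 := (hmem z z).mp ((hself z).mpr hz)
      rw [hr] at a3
      have a4 : v x₀ z + v y z = 1 := a3
      rw [a1, a2] at a4
      exact absurd a4 (by decide)
    have hBO : ∀ x ∈ O, ∀ t : E, (t ∈ B x ↔ (t ∈ O ∧ B t = B x) ∨ (t ∈ 𝓔 ∧ B t = O)) := by
      intro x hx t
      rcases huniv t with h | h
      · constructor
        · intro ht
          exact Or.inl ⟨h, (K x hx t h ht).symm⟩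
        · rintro (⟨_, hbt⟩ | ⟨ht𝓔, _⟩)
          · exact hbt ▸ ((hself t).mpr h)
          · exact absurd h (Finset.disjoint_right.mp hdisj ht𝓔)
      · constructor
        · intro ht
          exact Or.inr ⟨h, (hEO x hx t h).mp ht⟩
        · rintro (⟨htO, _⟩ | ⟨_, hbt⟩)
          · exact absurd htO (Finset.disjoint_right.mp hdisj h)
          · exact (hEO x hx t h).mpr hbt
    refine ⟨O.filter (fun y => B y = B x₀), O \ O.filter (fun y => B y = B x₀),
      𝓔 \ 𝓔.filter (fun t => B t = O), 𝓔.filter (fun t => B t = O),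
      Finset.union_sdiff_of_subset (Finset.filter_subset _ _),
      Finset.disjoint_sdiff,
      Finset.sdiff_union_of_subset (Finset.filter_subset _ _),
      Finset.sdiff_disjoint, ?_, ?_, ?_, ?_, ?_⟩
    · intro x hx
      obtain ⟨hxO, hbx⟩ := Finset.mem_filter.mp hx
      ext t
      rw [Finset.mem_union, Finset.mem_filter, Finset.mem_filter, hBO x hxO t, hbx]
    · intro x hx
      obtain ⟨hxO, hxn⟩ := Finset.mem_sdiff.mp hx
      have hxne : B x ≠ B x₀ := fun h => hxn (Finset.mem_filter.mpr ⟨hxO, h⟩)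
      ext t
      rw [Finset.mem_union, Finset.mem_sdiff, Finset.mem_filter, Finset.mem_filter,
        hBO x hxO t]
      constructor
      · rintro (⟨htO, hbt⟩ | ⟨ht𝓔, hbt⟩)
        · exact Or.inl ⟨htO, fun hc => hxne (hbt.symm.trans hc.2)⟩
        · exact Or.inr ⟨ht𝓔, hbt⟩
      · rintro (⟨htO, htn⟩ | ⟨ht𝓔, hbt⟩)
        · have htne : B t ≠ B x₀ := fun h => htn ⟨htO, h⟩
          exact Or.inl ⟨htO, hclass t htO x hxO htne hxne⟩
        · exact Or.inr ⟨ht𝓔, hbt⟩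
    · intro x hx
      obtain ⟨hx𝓔, hxn⟩ := Finset.mem_sdiff.mp hx
      rcases hE x hx𝓔 with h | h
      · exact h
      · exact absurd (Finset.mem_filter.mpr ⟨hx𝓔, h⟩) hxn
    · intro x hx
      exact (Finset.mem_filter.mp hx).2
    · intro hr2
      refine ⟨⟨x₀, Finset.mem_filter.mpr ⟨hx₀, rfl⟩⟩, ?_⟩
      rintro ⟨h1, h2⟩
      have hOsub : O ⊆ O.filter (fun y => B y = B x₀) := by
        rwa [Finset.sdiff_eq_empty_iff_subset] at h1
      have hone : ∀ x : E, v x = v x₀ ∨ v x = 0 := by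
        intro x
        rcases huniv x with h | h
        · exact Or.inl (hveq _ _ (Finset.mem_filter.mp (hOsub h)).2)
        · right
          have hbx : B x = ∅ := by
            rcases hE x h with h' | h'
            · exact h'
            · exfalso
              have hmemf : x ∈ Finset.filter (fun t => B t = O) 𝓔 :=
                Finset.mem_filter.mpr ⟨h, h'⟩
              rw [h2] at hmemf
              simp at hmemf
          funext z
          exact (hval0 x z).mp (by simp [hbx])
      have hle : LinearMap.range b ≤ Submodule.span (ZMod 2) {v x₀} := by
        rw [hrange]
        refine Submodule.span_le.mpr ?_
        rintro _ ⟨x, rfl⟩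
        rcases hone x with h | h
        · rw [h]
          exact Submodule.mem_span_singleton_self _
        · rw [h]
          exact Submodule.zero_mem _
      have hfle := Submodule.finrank_mono hle
      rw [hr2, finrank_span_singleton (hnz x₀ hx₀)] at hfle
      omega
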